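/- (Convergence of MI-FGM with constant step-size) Let J : ℝ^d → ℝ be concave differentiable with ‖∇J(x)‖ ≤ G on a bounded closed convex set Q, let x* maximize J over Q, let 0 ≤ μ < 1, and let {x_t} ⊆ Q be generated by x_{t+1} = P_Q[x_t + α g_t + μ(x_t − x_{t−1})] with g_t = ∇J(x_t), x_0 = x_{−1} ∈ Q, and constant step-size α = C/√T for some C > 0. Suppose ‖x* − (x_t + p_t)‖² ≤ M for all t where p_t = (μ/(1−μ))(x_t − x_{t−1}). Then J(x*) − J((1/T)∑_{t=1}^{T} x_t) ≤ (μ/((1−μ)T))(J(x_T) − J(x_0)) + ((1−μ)M)/(2C√T) + (C G²)/(2(1−μ)√T). -/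

import Mathlib

open RealInnerProductSpace Finset

private lemma grad_ineq' {d : ℕ} {J : EuclideanSpace ℝ (Fin d) → ℝ}
    (hJ : ConcaveOn ℝ Set.univ J) (hdiff : Differentiable ℝ J)
    (x y : EuclideanSpace ℝ (Fin d)) :
    J y ≤ J x + ⟪gradient J x, y - x⟫ := by
  have hinner : ⟪gradient J x, y - x⟫ = fderiv ℝ J x (y - x) := by
    simp [gradient, InnerProductSpace.toDual_symm_apply]
  have hfc : ConvexOn ℝ Set.univ (fun z => -J z) := hJ.neg
  have hφ : ConvexOn ℝ Set.univ (fun s : ℝ => -J (x + s • (y - x))) := by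
    have := hfc.comp_affineMap (AffineMap.lineMap x y)
    simp only [Set.preimage_univ] at this
    refine cast (congrArg (ConvexOn ℝ Set.univ) ?_) this
    funext s
    simp [AffineMap.lineMap_apply]
    congr 1
    abel
  have hline : HasDerivAt (fun s : ℝ => x + s • (y - x)) (y - x) 0 := by
    simpa using ((hasDerivAt_id (0:ℝ)).smul_const (y - x)).const_add x
  have hd : HasDerivAt (fun s : ℝ => -J (x + s • (y - x)))
      (-(fderiv ℝ J x (y - x))) 0 := by
    have h2 : HasDerivAt (fun s : ℝ => J (x + s • (y - x))) (fderiv ℝ J x (y - x)) 0 := by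
      have := ((hdiff (x + (0:ℝ) • (y - x))).hasFDerivAt).comp_hasDerivAt 0 hline
      simpa [Function.comp_def] using this
    exact h2.neg
  have hslope := hφ.le_slope_of_hasDerivAt (Set.mem_univ (0:ℝ)) (Set.mem_univ (1:ℝ))
    one_pos hd
  rw [slope_def_field] at hslope
  simp at hslope
  rw [hinner, map_sub]
  linarith

private lemma proj_ineq' {d : ℕ} {Q : Set (EuclideanSpace ℝ (Fin d))} (hQcv : Convex ℝ Q)
    {w v : EuclideanSpace ℝ (Fin d)} (hv : v ∈ Q)
    (hmin : ∀ u ∈ Q, dist w v ≤ dist w u) {s : EuclideanSpace ℝ (Fin d)} (hs : s ∈ Q) :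
    ‖s - v‖ ≤ ‖s - w‖ := by
  have : Nonempty Q := ⟨⟨v, hv⟩⟩
  have hinf : ‖w - v‖ = ⨅ u : Q, ‖w - u‖ := by
    apply le_antisymm
    · exact le_ciInf fun u => by simpa [dist_eq_norm] using hmin u u.2
    · exact ciInf_le ⟨0, fun b hb => by rcases hb with ⟨u, rfl⟩; positivity⟩ (⟨v, hv⟩ : Q)
  have hvar : ⟪w - v, s - v⟫ ≤ 0 :=
    (norm_eq_iInf_iff_real_inner_le_zero hQcv hv).mp hinf s hs
  have expand : ‖s - w‖^2 = ‖s - v‖^2 - 2 * ⟪s - v, w - v⟫ + ‖w - v‖^2 := by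
    have h : s - w = (s - v) - (w - v) := by abel
    rw [h, norm_sub_sq_real]
  have hsym : ⟪s - v, w - v⟫ = ⟪w - v, s - v⟫ := real_inner_comm _ _
  have h2 : ‖s - v‖^2 ≤ ‖s - w‖^2 := by nlinarith [sq_nonneg ‖w - v‖]
  nlinarith [norm_nonneg (s - v), norm_nonneg (s - w)]

set_option maxHeartbeats 1000000 in
theorem stmt_7 {d : ℕ} (J : EuclideanSpace ℝ (Fin d) → ℝ)
    (hJ : ConcaveOn ℝ Set.univ J) (hdiff : Differentiable ℝ J)
    (Q : Set (EuclideanSpace ℝ (Fin d)))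
    (hQb : Bornology.IsBounded Q) (hQcl : IsClosed Q) (hQcv : Convex ℝ Q)
    (G : ℝ) (hG : ∀ y ∈ Q, ‖gradient J y‖ ≤ G)
    (xs : EuclideanSpace ℝ (Fin d)) (hxs : xs ∈ Q) (hmax : ∀ y ∈ Q, J y ≤ J xs)
    (μ : ℝ) (hμ0 : 0 ≤ μ) (hμ1 : μ < 1)
    (T : ℕ) (hT : 1 ≤ T) (C : ℝ) (hC : 0 < C)
    (α : ℝ) (hαdef : α = C / Real.sqrt T)
    (x : ℕ → EuclideanSpace ℝ (Fin d)) (hxQ : ∀ t, x t ∈ Q)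
    (g : ℕ → EuclideanSpace ℝ (Fin d)) (hg : ∀ t, g t = gradient J (x t))
    (hiter : ∀ t, t < T →
      ∀ u ∈ Q, dist (x t + α • g t + μ • (x t - x (t - 1))) (x (t + 1)) ≤
        dist (x t + α • g t + μ • (x t - x (t - 1))) u)
    (M : ℝ)
    (hM : ∀ t, t ≤ T + 1 →
      ‖xs - (x t + (μ / (1 - μ)) • (x t - x (t - 1)))‖ ^ 2 ≤ M) :
    J xs - J ((T : ℝ)⁻¹ • ∑ t ∈ Icc 1 T, x t) ≤
      (μ / ((1 - μ) * T)) * (J (x T) - J (x 0))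
        + (1 - μ) * M / (2 * C * Real.sqrt T)
        + C * G ^ 2 / (2 * (1 - μ) * Real.sqrt T) := by
  have h1μ : (0:ℝ) < 1 - μ := by linarith
  have hTpos : (0:ℝ) < T := by exact_mod_cast Nat.lt_of_lt_of_le Nat.zero_lt_one hT
  set s := Real.sqrt T with hs
  have hs0 : 0 < s := Real.sqrt_pos.mpr hTpos
  have hsT : s ^ 2 = (T:ℝ) := Real.sq_sqrt hTpos.le
  have hα0 : 0 < α := by rw [hαdef]; positivity
  set β : ℝ := μ / (1 - μ) with hβ
  set η : ℝ := α / (1 - μ) with hη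
  have hη0 : 0 < η := by positivity
  have hβ0 : 0 ≤ β := by positivity
  have hGnn : 0 ≤ G := le_trans (norm_nonneg _) (hG (x 0) (hxQ 0))
  set y : ℕ → EuclideanSpace ℝ (Fin d) := fun t => x t + β • (x t - x (t-1)) with hy
  set b : ℕ → ℝ := fun t => if t ≤ T then ‖xs - y t‖^2 else 0 with hb
  have hgt : ∀ t, ‖g t‖ ≤ G := fun t => by rw [hg t]; exact hG _ (hxQ t)
  -- key per-step inequality
  have key : ∀ t, 1 ≤ t → t ≤ T →
      2*η*⟪g t, xs - y t⟫ ≤ b t - b (t+1) + η^2*G^2 := by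
    intro t ht1 htT
    have hbt : b t = ‖xs - y t‖^2 := if_pos htT
    have base : 2*η*⟪g t, xs - y t⟫
        = ‖xs - y t‖^2 + η^2*‖g t‖^2 - ‖xs - y t - η • g t‖^2 := by
      have e1 : ‖xs - y t - η • g t‖^2
          = ‖xs - y t‖^2 - 2*⟪xs - y t, η • g t⟫ + ‖η • g t‖^2 := norm_sub_sq_real _ _
      have e2 : ⟪xs - y t, η • g t⟫ = η * ⟪g t, xs - y t⟫ := by
        rw [real_inner_smul_right, real_inner_comm]
      have e3 : ‖η • g t‖^2 = η^2*‖g t‖^2 := by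
        rw [norm_smul, Real.norm_eq_abs, abs_of_pos hη0]; ring
      rw [e2, e3] at e1; linarith
    have hgb : η^2*‖g t‖^2 ≤ η^2*G^2 :=
      mul_le_mul_of_nonneg_left (pow_le_pow_left₀ (norm_nonneg (g t)) (hgt t) 2) (sq_nonneg η)
    rcases lt_or_eq_of_le htT with hlt | heq
    · -- t < T : use the projection step
      have hb1 : b (t+1) = ‖xs - y (t+1)‖^2 := if_pos hlt
      set w := x t + α • g t + μ • (x t - x (t - 1)) with hw
      set st : EuclideanSpace ℝ (Fin d) := (1-μ) • xs + μ • x t with hst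
      have hstQ : st ∈ Q := hQcv hxs (hxQ t) h1μ.le hμ0 (by ring)
      have hproj : ‖st - x (t+1)‖ ≤ ‖st - w‖ :=
        proj_ineq' hQcv (hxQ (t+1)) (hiter t hlt) hstQ
      have hμβ : (1-μ) * β = μ := by rw [hβ]; field_simp
      have hαη : (1-μ) * η = α := by rw [hη]; field_simp
      have hid1 : st - x (t+1) = (1-μ) • (xs - y (t+1)) := by
        have h1 : (t+1) - 1 = t := by omega
        simp only [hy, hst, h1]
        simp only [smul_sub, smul_add, smul_smul, hμβ, sub_smul, one_smul]
        abel
      have hid2 : st - w = (1-μ) • (xs - y t - η • g t) := by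
        simp only [hy, hst, hw]
        simp only [smul_sub, smul_add, smul_smul, hμβ, hαη, sub_smul, one_smul]
        abel
      have hn1 : ‖st - x (t+1)‖ = (1-μ) * ‖xs - y (t+1)‖ := by
        rw [hid1, norm_smul, Real.norm_eq_abs, abs_of_pos h1μ]
      have hn2 : ‖st - w‖ = (1-μ) * ‖xs - y t - η • g t‖ := by
        rw [hid2, norm_smul, Real.norm_eq_abs, abs_of_pos h1μ]
      have hle : ‖xs - y (t+1)‖ ≤ ‖xs - y t - η • g t‖ := by
        rw [hn1, hn2] at hproj
        exact le_of_mul_le_mul_left (by linarith [hproj]) h1μ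
      have hle2 : ‖xs - y (t+1)‖^2 ≤ ‖xs - y t - η • g t‖^2 := by
        nlinarith [norm_nonneg (xs - y (t+1))]
      rw [hbt, hb1]
      linarith [base, hgb, hle2]
    · -- t = T : drop the last term
      have hb1 : b (t+1) = 0 := by
        simp only [hb]
        rw [if_neg (by omega : ¬ (t+1 ≤ T))]
      rw [hbt, hb1]
      have hBnn : (0:ℝ) ≤ ‖xs - y t - η • g t‖^2 := sq_nonneg _
      linarith [base, hgb]
  -- concavity per step
  have conc : ∀ t, 1 ≤ t →
      J xs - J (x t) - β*(J (x t) - J (x (t-1))) ≤ ⟪g t, xs - y t⟫ := by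
    intro t _
    have h1 : J xs ≤ J (x t) + ⟪gradient J (x t), xs - x t⟫ := grad_ineq' hJ hdiff _ _
    have h2 : J (x (t-1)) ≤ J (x t) + ⟪gradient J (x t), x (t-1) - x t⟫ :=
      grad_ineq' hJ hdiff _ _
    have hsplit : ⟪g t, xs - x t⟫ = ⟪g t, xs - y t⟫ + β * ⟪g t, x t - x (t-1)⟫ := by
      have : xs - x t = (xs - y t) + β • (x t - x (t-1)) := by
        simp only [hy]; abel
      rw [this, inner_add_right, real_inner_smul_right]
    have hneg : ⟪gradient J (x t), x (t-1) - x t⟫ = -⟪g t, x t - x (t-1)⟫ := by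
      rw [hg t, ← inner_neg_right]; congr 1; abel
    rw [hg t] at hsplit hneg ⊢
    rw [hneg] at h2
    nlinarith [mul_le_mul_of_nonneg_left (by linarith : ⟪gradient J (x t), x t - x (t-1)⟫ ≤ J (x t) - J (x (t-1))) hβ0]
  -- sums
  set S : ℝ := ∑ t ∈ Icc 1 T, J (x t) with hS
  set I : ℝ := ∑ t ∈ Icc 1 T, ⟪g t, xs - y t⟫ with hI
  have hIcc : ∀ f : ℕ → ℝ, ∑ t ∈ Icc 1 T, f t = ∑ i ∈ range T, f (i+1) := by
    intro f
    rw [← Finset.Ico_add_one_right_eq_Icc, Finset.sum_Ico_eq_sum_range]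
    simp [add_comm]
  have htel1 : ∑ t ∈ Icc 1 T, (J (x t) - J (x (t-1))) = J (x T) - J (x 0) := by
    rw [hIcc]
    have := Finset.sum_range_sub (f := fun i => J (x i)) T
    simpa using this
  have htel2 : ∑ t ∈ Icc 1 T, (b t - b (t+1)) = b 1 - b (T+1) := by
    rw [hIcc]
    exact Finset.sum_range_sub' (f := fun i => b (i+1)) T
  have hcard : (Icc 1 T).card = T := by rw [Nat.card_Icc]; omega
  have hsum1 : (T:ℝ) * J xs - S - β*(J (x T) - J (x 0)) ≤ I := by
    have := Finset.sum_le_sum (s := Icc 1 T)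
      (f := fun t => J xs - J (x t) - β*(J (x t) - J (x (t-1))))
      (g := fun t => ⟪g t, xs - y t⟫)
      (fun t ht => conc t (Finset.mem_Icc.mp ht).1)
    rw [Finset.sum_sub_distrib, Finset.sum_sub_distrib, ← Finset.mul_sum, htel1,
      Finset.sum_const, hcard] at this
    simpa [smul_eq_mul] using this
  have hsum2 : 2*η*I ≤ M + (T:ℝ)*η^2*G^2 := by
    have h := Finset.sum_le_sum (s := Icc 1 T)
      (f := fun t => 2*η*⟪g t, xs - y t⟫)
      (g := fun t => b t - b (t+1) + η^2*G^2)
      (fun t ht => key t (Finset.mem_Icc.mp ht).1 (Finset.mem_Icc.mp ht).2)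
    rw [← Finset.mul_sum, ← hI] at h
    rw [Finset.sum_add_distrib, htel2, Finset.sum_const, hcard] at h
    have hb1M : b 1 ≤ M := by
      rw [hb]
      simp only [hT, if_pos]
      simpa [hy, hβ] using hM 1 (by omega)
    have hbT1 : 0 ≤ b (T+1) := by rw [hb]; positivity
    calc 2*η*I ≤ b 1 - b (T+1) + (T:ℝ)*(η^2*G^2) := by simpa [smul_eq_mul] using h
    _ ≤ M + (T:ℝ)*η^2*G^2 := by nlinarith
  -- Jensen
  have hJensen : (T:ℝ)⁻¹ * S ≤ J ((T : ℝ)⁻¹ • ∑ t ∈ Icc 1 T, x t) := by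
    have hjen := hJ.le_map_sum (t := Icc 1 T) (w := fun _ => (T:ℝ)⁻¹) (p := x)
      (fun i _ => by positivity)
      (by rw [Finset.sum_const, hcard, nsmul_eq_mul]; field_simp)
      (fun i _ => Set.mem_univ _)
    calc (T:ℝ)⁻¹ * S = ∑ t ∈ Icc 1 T, (T:ℝ)⁻¹ • J (x t) := by
          rw [hS, Finset.mul_sum]; simp [smul_eq_mul]
    _ ≤ J (∑ t ∈ Icc 1 T, (T:ℝ)⁻¹ • x t) := hjen
    _ = J ((T:ℝ)⁻¹ • ∑ t ∈ Icc 1 T, x t) := by rw [Finset.smul_sum]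
  -- assemble
  have hIle : I ≤ (M + (T:ℝ)*η^2*G^2) / (2*η) := by
    rw [le_div_iff₀ (by positivity)]
    linarith [hsum2]
  have hmain : J xs - J ((T : ℝ)⁻¹ • ∑ t ∈ Icc 1 T, x t)
      ≤ (T:ℝ)⁻¹ * (β*(J (x T) - J (x 0)) + (M + (T:ℝ)*η^2*G^2) / (2*η)) := by
    have h1 : J xs - (T:ℝ)⁻¹ * S ≤ (T:ℝ)⁻¹ * (β*(J (x T) - J (x 0)) + I) := by
      have := mul_le_mul_of_nonneg_left hsum1 (le_of_lt (inv_pos.mpr hTpos))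
      have hTne : (T:ℝ) ≠ 0 := ne_of_gt hTpos
      calc J xs - (T:ℝ)⁻¹ * S = (T:ℝ)⁻¹ * ((T:ℝ) * J xs - S) := by field_simp
      _ ≤ (T:ℝ)⁻¹ * (I + β*(J (x T) - J (x 0))) := by
          apply mul_le_mul_of_nonneg_left _ (le_of_lt (inv_pos.mpr hTpos))
          linarith
      _ = (T:ℝ)⁻¹ * (β*(J (x T) - J (x 0)) + I) := by ring
    have h2 : (T:ℝ)⁻¹ * (β*(J (x T) - J (x 0)) + I)
        ≤ (T:ℝ)⁻¹ * (β*(J (x T) - J (x 0)) + (M + (T:ℝ)*η^2*G^2) / (2*η)) := by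
      apply mul_le_mul_of_nonneg_left _ (le_of_lt (inv_pos.mpr hTpos))
      linarith
    linarith [hJensen]
  refine le_trans hmain (le_of_eq ?_)
  rw [hη, hαdef, hβ]
  rw [← hsT]
  have h1μne : (1:ℝ) - μ ≠ 0 := ne_of_gt h1μ
  have hsne : s ≠ 0 := ne_of_gt hs0
  have hCne : C ≠ 0 := ne_of_gt hC
  field_simp
  ring
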